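/- Continuity of the Nemytskii map: under the same growth assumptions on the Carathéodory function f (|f(x, s, ξ)| ≤ C(|k(x)| + |s|^{q(x)−1} + Σ_{i=1}^n |ξ_i|^{r_i(x)}) with q ∈ C(Ω̄), 1 < q⁻, q(x) ≤ p_M(x), ∫_Ω |k|^{q'(x)} dx < ∞, 1 < r_i(x) q'(x) ≤ p_i(x)), let u_k, u : Ω → ℝ and g_k, g : Ω → ℝ^n be measurable with finite modulars ∫_Ω |u_k|^{p_M(x)} dx, ∫_Ω |(g_k)_i|^{p_i(x)} dx < ∞, and suppose ∫_Ω |u_k − u|^{p_M(x)} dx → 0 and ∫_Ω |(g_k)_i − g_i|^{p_i(x)} dx → 0 for each i as k → ∞. Then ∫_Ω |f(x, u_k(x), g_k(x)) − f(x, u(x), g(x))|^{q'(x)} dx → 0 as k → ∞. -/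

import Mathlib

open MeasureTheory Filter Topology
open scoped ENNReal NNReal

set_option maxHeartbeats 1000000

open MeasureTheory Filter Topology
open scoped ENNReal NNReal

private lemma aux_abs_sub (a b : ℝ) : |a - b| ≤ |a| + |b| := by
  calc |a - b| = |a + (-b)| := by ring_nf
    _ ≤ |a| + |(-b)| := abs_add_le _ _
    _ = |a| + |b| := by rw [abs_neg]

private lemma aux_one_add (t a b : ℝ) (ht : 0 ≤ t) (ha : 0 ≤ a) (hab : a ≤ b) :
    t ^ a ≤ 1 + t ^ b := by
  rcases le_total t 1 with h | h
  · have h1 := Real.rpow_le_one ht h ha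
    have h2 : 0 ≤ t ^ b := Real.rpow_nonneg ht b
    linarith
  · have h1 := Real.rpow_le_rpow_of_exponent_le h hab
    have h2 : (0:ℝ) ≤ t ^ b := Real.rpow_nonneg ht b
    linarith

private lemma aux_two (a b e : ℝ) (ha : 0 ≤ a) (hb : 0 ≤ b) (he : 0 ≤ e) :
    (a + b) ^ e ≤ 2 ^ e * (a ^ e + b ^ e) := by
  have h2 : (0:ℝ) ≤ 2 ^ e := Real.rpow_nonneg (by norm_num) e
  rcases le_total a b with h | h
  · calc (a + b) ^ e ≤ (2 * b) ^ e := Real.rpow_le_rpow (by linarith) (by linarith) he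
      _ = 2 ^ e * b ^ e := Real.mul_rpow (by norm_num) hb
      _ ≤ 2 ^ e * (a ^ e + b ^ e) := by
          have := Real.rpow_nonneg ha e
          nlinarith
  · calc (a + b) ^ e ≤ (2 * a) ^ e := Real.rpow_le_rpow (by linarith) (by linarith) he
      _ = 2 ^ e * a ^ e := Real.mul_rpow (by norm_num) ha
      _ ≤ 2 ^ e * (a ^ e + b ^ e) := by
          have := Real.rpow_nonneg hb e
          nlinarith

private lemma aux_three (a b c e Q : ℝ) (ha : 0 ≤ a) (hb : 0 ≤ b) (hc : 0 ≤ c)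
    (he : 0 ≤ e) (heQ : e ≤ Q) :
    (a + b + c) ^ e ≤ 4 ^ Q * (a ^ e + b ^ e + c ^ e) := by
  have h2e : (0:ℝ) ≤ 2 ^ e := Real.rpow_nonneg (by norm_num) e
  have h24 : (2:ℝ) ^ e ≤ 4 ^ Q :=
    le_trans (Real.rpow_le_rpow (by norm_num) (by norm_num) he)
      (Real.rpow_le_rpow_of_exponent_le (by norm_num) heQ)
  have h44 : (2:ℝ) ^ e * 2 ^ e ≤ 4 ^ Q := by
    have h4 : (2:ℝ) ^ e * 2 ^ e = 4 ^ e := by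
      rw [← Real.mul_rpow (by norm_num) (by norm_num)]; norm_num
    rw [h4]
    exact Real.rpow_le_rpow_of_exponent_le (by norm_num) heQ
  have step1 : (a + (b + c)) ^ e ≤ 2 ^ e * (a ^ e + (b + c) ^ e) :=
    aux_two a (b + c) e ha (by linarith) he
  have step2 : (b + c) ^ e ≤ 2 ^ e * (b ^ e + c ^ e) := aux_two b c e hb hc he
  have step2' : 2 ^ e * (b + c) ^ e ≤ 2 ^ e * (2 ^ e * (b ^ e + c ^ e)) :=
    mul_le_mul_of_nonneg_left step2 h2e
  have hae : 0 ≤ a ^ e := Real.rpow_nonneg ha e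
  have hbe : 0 ≤ b ^ e := Real.rpow_nonneg hb e
  have hce : 0 ≤ c ^ e := Real.rpow_nonneg hc e
  have hbce : 0 ≤ b ^ e + c ^ e := by linarith
  have h1 : 2 ^ e * a ^ e ≤ 4 ^ Q * a ^ e := mul_le_mul_of_nonneg_right h24 hae
  have h2 : (2 ^ e * 2 ^ e) * (b ^ e + c ^ e) ≤ 4 ^ Q * (b ^ e + c ^ e) :=
    mul_le_mul_of_nonneg_right h44 hbce
  have key : (a + b + c) ^ e = (a + (b + c)) ^ e := by ring_nf
  nlinarith [step1, step2', h1, h2]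

private lemma aux_sum {n : ℕ} (hn : 0 < n) (a : Fin n → ℝ) (ha : ∀ i, 0 ≤ a i) {e : ℝ}
    (he : 0 ≤ e) : (∑ i, a i) ^ e ≤ (n : ℝ) ^ e * ∑ i, a i ^ e := by
  haveI : Nonempty (Fin n) := Fin.pos_iff_nonempty.mp hn
  obtain ⟨j, -, hj⟩ := Finset.exists_max_image Finset.univ a ⟨Classical.arbitrary _, Finset.mem_univ _⟩
  calc (∑ i, a i) ^ e ≤ ((n : ℝ) * a j) ^ e := by
        apply Real.rpow_le_rpow (Finset.sum_nonneg fun i _ => ha i) ?_ he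
        calc ∑ i, a i ≤ ∑ _i : Fin n, a j :=
              Finset.sum_le_sum (fun i _ => hj i (Finset.mem_univ i))
          _ = (n : ℝ) * a j := by simp [Finset.sum_const, Finset.card_univ, mul_comm]
    _ = (n : ℝ) ^ e * (a j) ^ e := Real.mul_rpow (by positivity) (ha j)
    _ ≤ (n : ℝ) ^ e * ∑ i, a i ^ e := by
        apply mul_le_mul_of_nonneg_left
          (Finset.single_le_sum (fun i _ => Real.rpow_nonneg (ha i) e) (Finset.mem_univ j))
          (Real.rpow_nonneg (by positivity) e)

private lemma aux_master {n : ℕ} (hn : 0 < n) {C Q kx qx q'x pMx F s : ℝ}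
    {px rx : Fin n → ℝ} {ξ : Fin n → ℝ}
    (hC : 0 < C) (hq : 1 < qx) (hq'def : q'x = qx / (qx - 1)) (hq'Q : q'x ≤ Q)
    (hqpM : qx ≤ pMx) (hr0 : ∀ i, 0 ≤ rx i) (hrp : ∀ i, rx i * q'x ≤ px i)
    (hg : |F| ≤ C * (|kx| + |s| ^ (qx - 1) + ∑ i, |ξ i| ^ rx i)) :
    |F| ^ q'x ≤ ((max 1 C) ^ Q * 4 ^ Q * (n : ℝ) ^ Q) *
      (|kx| ^ q'x + (1 + |s| ^ pMx) + ∑ i, (1 + |ξ i| ^ px i)) := by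
  have hq'pos : 0 < q'x := by rw [hq'def]; apply div_pos <;> linarith
  have hq'1 : 1 ≤ q'x := by rw [hq'def, le_div_iff₀ (by linarith)]; linarith
  have hQ0 : 0 ≤ Q := by linarith
  have hqq' : (qx - 1) * q'x = qx := by
    have hne : qx - 1 ≠ 0 := by linarith
    rw [hq'def, mul_comm]; exact div_mul_cancel₀ qx hne
  have hA : (0:ℝ) ≤ |kx| := abs_nonneg _
  have hB : (0:ℝ) ≤ |s| ^ (qx - 1) := Real.rpow_nonneg (abs_nonneg _) _
  have hG : (0:ℝ) ≤ ∑ i, |ξ i| ^ rx i :=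
    Finset.sum_nonneg fun i _ => Real.rpow_nonneg (abs_nonneg _) _
  have hc1 : (1:ℝ) ≤ max 1 C := le_max_left _ _
  have hc1Q : (0:ℝ) ≤ (max 1 C) ^ Q := Real.rpow_nonneg (by linarith) _
  have h4Q : (0:ℝ) ≤ (4:ℝ) ^ Q := Real.rpow_nonneg (by norm_num) _
  have hnQ1 : (1:ℝ) ≤ (n : ℝ) ^ Q := by
    have h1n : (1:ℝ) ≤ (n:ℝ) := by exact_mod_cast hn
    calc (1:ℝ) = 1 ^ Q := (Real.one_rpow Q).symm
      _ ≤ (n:ℝ) ^ Q := Real.rpow_le_rpow (by norm_num) h1n hQ0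
  -- second factor bounds
  have hB2 : (|s| ^ (qx - 1)) ^ q'x = |s| ^ qx := by
    rw [← Real.rpow_mul (abs_nonneg s), hqq']
  have hB3 : |s| ^ qx ≤ 1 + |s| ^ pMx := aux_one_add _ _ _ (abs_nonneg s) (by linarith) hqpM
  have hG2 : (∑ i, |ξ i| ^ rx i) ^ q'x ≤ (n:ℝ) ^ q'x * ∑ i, (|ξ i| ^ rx i) ^ q'x :=
    aux_sum hn _ (fun i => Real.rpow_nonneg (abs_nonneg _) _) hq'pos.le
  have hG3 : ∑ i, (|ξ i| ^ rx i) ^ q'x ≤ ∑ i, (1 + |ξ i| ^ px i) := by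
    apply Finset.sum_le_sum
    intro i _
    rw [← Real.rpow_mul (abs_nonneg _)]
    exact aux_one_add _ _ _ (abs_nonneg _) (mul_nonneg (hr0 i) hq'pos.le) (hrp i)
  have hnq'Q : (n:ℝ) ^ q'x ≤ (n:ℝ) ^ Q := by
    have h1n : (1:ℝ) ≤ (n:ℝ) := by exact_mod_cast hn
    exact Real.rpow_le_rpow_of_exponent_le h1n hq'Q
  have hG4 : (∑ i, |ξ i| ^ rx i) ^ q'x ≤ (n:ℝ) ^ Q * ∑ i, (1 + |ξ i| ^ px i) := by
    refine le_trans hG2 (mul_le_mul hnq'Q hG3 ?_ (by linarith)) 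
    exact Finset.sum_nonneg fun i _ => Real.rpow_nonneg (Real.rpow_nonneg (abs_nonneg _) _) _
  have hsum0 : (0:ℝ) ≤ ∑ i, (1 + |ξ i| ^ px i) := by
    apply Finset.sum_nonneg
    intro i _
    have := Real.rpow_nonneg (abs_nonneg (ξ i)) (px i)
    linarith
  have hkq'0 : (0:ℝ) ≤ |kx| ^ q'x := Real.rpow_nonneg hA _
  have h1s0 : (0:ℝ) ≤ 1 + |s| ^ pMx := by
    have := Real.rpow_nonneg (abs_nonneg s) pMx; linarith
  calc |F| ^ q'x
      ≤ (C * (|kx| + |s| ^ (qx - 1) + ∑ i, |ξ i| ^ rx i)) ^ q'x :=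
        Real.rpow_le_rpow (abs_nonneg F) hg hq'pos.le
    _ = C ^ q'x * (|kx| + |s| ^ (qx - 1) + ∑ i, |ξ i| ^ rx i) ^ q'x :=
        Real.mul_rpow hC.le (by linarith)
    _ ≤ (max 1 C) ^ Q * (|kx| + |s| ^ (qx - 1) + ∑ i, |ξ i| ^ rx i) ^ q'x := by
        apply mul_le_mul_of_nonneg_right _ (Real.rpow_nonneg (by linarith) _)
        exact le_trans (Real.rpow_le_rpow hC.le (le_max_right 1 C) hq'pos.le)
          (Real.rpow_le_rpow_of_exponent_le hc1 hq'Q)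
    _ ≤ (max 1 C) ^ Q * (4 ^ Q * (|kx| ^ q'x + (|s| ^ (qx - 1)) ^ q'x +
          (∑ i, |ξ i| ^ rx i) ^ q'x)) :=
        mul_le_mul_of_nonneg_left (aux_three _ _ _ _ _ hA hB hG hq'pos.le hq'Q) hc1Q
    _ ≤ (max 1 C) ^ Q * (4 ^ Q * (|kx| ^ q'x + (1 + |s| ^ pMx) +
          (n:ℝ) ^ Q * ∑ i, (1 + |ξ i| ^ px i))) := by
        apply mul_le_mul_of_nonneg_left _ hc1Q
        apply mul_le_mul_of_nonneg_left _ h4Q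
        rw [hB2]
        exact add_le_add (add_le_add le_rfl hB3) hG4
    _ ≤ (max 1 C) ^ Q * (4 ^ Q * ((n:ℝ) ^ Q *
          (|kx| ^ q'x + (1 + |s| ^ pMx) + ∑ i, (1 + |ξ i| ^ px i)))) := by
        apply mul_le_mul_of_nonneg_left _ hc1Q
        apply mul_le_mul_of_nonneg_left _ h4Q
        have e1 : |kx| ^ q'x ≤ (n:ℝ) ^ Q * |kx| ^ q'x := le_mul_of_one_le_left hkq'0 hnQ1
        have e2 : 1 + |s| ^ pMx ≤ (n:ℝ) ^ Q * (1 + |s| ^ pMx) := le_mul_of_one_le_left h1s0 hnQ1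
        nlinarith
    _ = ((max 1 C) ^ Q * 4 ^ Q * (n : ℝ) ^ Q) *
          (|kx| ^ q'x + (1 + |s| ^ pMx) + ∑ i, (1 + |ξ i| ^ px i)) := by ring

private lemma aux_pointwise {n : ℕ} (hn : 0 < n) {C Q P kx qx q'x pMx F1 F0 s1 s0 Su : ℝ}
    {px rx Sg : Fin n → ℝ} {ξ1 ξ0 : Fin n → ℝ}
    (hC : 0 < C) (hq : 1 < qx) (hq'def : q'x = qx / (qx - 1)) (hq'Q : q'x ≤ Q)
    (hqpM : qx ≤ pMx) (hpMP : pMx ≤ P) (hpxP : ∀ i, px i ≤ P)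
    (hr0 : ∀ i, 0 ≤ rx i) (hrp : ∀ i, rx i * q'x ≤ px i)
    (hg1 : |F1| ≤ C * (|kx| + |s1| ^ (qx - 1) + ∑ i, |ξ1 i| ^ rx i))
    (hg0 : |F0| ≤ C * (|kx| + |s0| ^ (qx - 1) + ∑ i, |ξ0 i| ^ rx i))
    (hvu : |s1 - s0| ^ pMx ≤ Su)
    (hvg : ∀ i, |ξ1 i - ξ0 i| ^ px i ≤ Sg i) :
    |F1 - F0| ^ q'x ≤
      (2 ^ Q * ((max 1 C) ^ Q * 4 ^ Q * (n : ℝ) ^ Q) * (2 ^ P + 1)) *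
      ((|kx| ^ q'x + (1 + |s0| ^ pMx) + ∑ i, (1 + |ξ0 i| ^ px i)) + (Su + ∑ i, Sg i)) := by
  have hq'pos : 0 < q'x := by rw [hq'def]; apply div_pos <;> linarith
  have hq'1 : 1 ≤ q'x := by rw [hq'def, le_div_iff₀ (by linarith)]; linarith
  have hQ0 : 0 ≤ Q := by linarith
  have hpM0 : 0 ≤ pMx := by linarith
  have hP0 : 0 ≤ P := by linarith
  have h2P1 : (1:ℝ) ≤ 2 ^ P := by
    calc (1:ℝ) = 2 ^ (0:ℝ) := (Real.rpow_zero 2).symm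
      _ ≤ 2 ^ P := Real.rpow_le_rpow_of_exponent_le one_le_two hP0
  have h2P0 : (0:ℝ) ≤ (2:ℝ) ^ P := by linarith
  set K₀ : ℝ := (max 1 C) ^ Q * 4 ^ Q * (n : ℝ) ^ Q with hK₀def
  have hK₀0 : 0 ≤ K₀ := by
    apply mul_nonneg (mul_nonneg (Real.rpow_nonneg (by positivity) _)
      (Real.rpow_nonneg (by norm_num) _)) (Real.rpow_nonneg (by positivity) _)
  set D1 : ℝ := |kx| ^ q'x + (1 + |s1| ^ pMx) + ∑ i, (1 + |ξ1 i| ^ px i) with hD1def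
  set D0 : ℝ := |kx| ^ q'x + (1 + |s0| ^ pMx) + ∑ i, (1 + |ξ0 i| ^ px i) with hD0def
  set R : ℝ := Su + ∑ i, Sg i with hRdef
  have hSu0 : 0 ≤ Su := le_trans (Real.rpow_nonneg (abs_nonneg _) _) hvu
  have hSg0 : ∀ i, 0 ≤ Sg i := fun i => le_trans (Real.rpow_nonneg (abs_nonneg _) _) (hvg i)
  have hR0 : 0 ≤ R := by
    rw [hRdef]
    exact add_nonneg hSu0 (Finset.sum_nonneg fun i _ => hSg0 i)
  have hD00 : 0 ≤ D0 := by
    rw [hD0def]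
    have h1 : (0:ℝ) ≤ |kx| ^ q'x := Real.rpow_nonneg (abs_nonneg _) _
    have h2 : (0:ℝ) ≤ |s0| ^ pMx := Real.rpow_nonneg (abs_nonneg _) _
    have h3 : (0:ℝ) ≤ ∑ i, (1 + |ξ0 i| ^ px i) := by
      apply Finset.sum_nonneg; intro i _
      have := Real.rpow_nonneg (abs_nonneg (ξ0 i)) (px i); linarith
    linarith
  have hm1 : |F1| ^ q'x ≤ K₀ * D1 := aux_master hn hC hq hq'def hq'Q hqpM hr0 hrp hg1
  have hm0 : |F0| ^ q'x ≤ K₀ * D0 := aux_master hn hC hq hq'def hq'Q hqpM hr0 hrp hg0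
  -- domination of D1
  have hs1b : |s1| ^ pMx ≤ 2 ^ P * (|s0| ^ pMx + Su) := by
    have habs : |s1| ≤ |s0| + |s1 - s0| := by
      have h := aux_abs_sub (s1 - s0) (-s0)
      simp only [sub_neg_eq_add, sub_add_cancel] at h
      calc |s1| = |s1 - s0 - (-s0)| := by ring_nf
        _ ≤ |s1 - s0| + |(-s0)| := aux_abs_sub _ _
        _ = |s0| + |s1 - s0| := by rw [abs_neg]; ring
    calc |s1| ^ pMx ≤ (|s0| + |s1 - s0|) ^ pMx :=
          Real.rpow_le_rpow (abs_nonneg _) habs hpM0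
      _ ≤ 2 ^ pMx * (|s0| ^ pMx + |s1 - s0| ^ pMx) :=
          aux_two _ _ _ (abs_nonneg _) (abs_nonneg _) hpM0
      _ ≤ 2 ^ P * (|s0| ^ pMx + Su) := by
          apply mul_le_mul (Real.rpow_le_rpow_of_exponent_le one_le_two hpMP)
            (add_le_add le_rfl hvu)
            (add_nonneg (Real.rpow_nonneg (abs_nonneg _) _)
              (Real.rpow_nonneg (abs_nonneg _) _)) h2P0
  have hgib : ∀ i, |ξ1 i| ^ px i ≤ 2 ^ P * (|ξ0 i| ^ px i + Sg i) := by
    intro i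
    have hpx0 : 0 ≤ px i := le_trans (mul_nonneg (hr0 i) hq'pos.le) (hrp i)
    have habs : |ξ1 i| ≤ |ξ0 i| + |ξ1 i - ξ0 i| := by
      calc |ξ1 i| = |ξ1 i - ξ0 i - (-ξ0 i)| := by ring_nf
        _ ≤ |ξ1 i - ξ0 i| + |(-ξ0 i)| := aux_abs_sub _ _
        _ = |ξ0 i| + |ξ1 i - ξ0 i| := by rw [abs_neg]; ring
    calc |ξ1 i| ^ px i ≤ (|ξ0 i| + |ξ1 i - ξ0 i|) ^ px i :=
          Real.rpow_le_rpow (abs_nonneg _) habs hpx0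
      _ ≤ 2 ^ px i * (|ξ0 i| ^ px i + |ξ1 i - ξ0 i| ^ px i) :=
          aux_two _ _ _ (abs_nonneg _) (abs_nonneg _) hpx0
      _ ≤ 2 ^ P * (|ξ0 i| ^ px i + Sg i) := by
          apply mul_le_mul (Real.rpow_le_rpow_of_exponent_le one_le_two (hpxP i))
            (add_le_add le_rfl (hvg i))
            (add_nonneg (Real.rpow_nonneg (abs_nonneg _) _)
              (Real.rpow_nonneg (abs_nonneg _) _)) h2P0
  have hD1b : D1 ≤ 2 ^ P * (D0 + R) := by
    have hsum : ∑ i, (1 + |ξ1 i| ^ px i) ≤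
        ∑ i, (2 ^ P * ((1 + |ξ0 i| ^ px i) + Sg i)) := by
      apply Finset.sum_le_sum
      intro i _
      have h := hgib i
      have h0 : (0:ℝ) ≤ |ξ0 i| ^ px i := Real.rpow_nonneg (abs_nonneg _) _
      nlinarith [hSg0 i]
    have hsum2 : ∑ i, (2 ^ P * ((1 + |ξ0 i| ^ px i) + Sg i)) =
        2 ^ P * (∑ i, (1 + |ξ0 i| ^ px i) + ∑ i, Sg i) := by
      rw [← Finset.mul_sum, Finset.sum_add_distrib]
    have hk0 : (0:ℝ) ≤ |kx| ^ q'x := Real.rpow_nonneg (abs_nonneg _) _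
    rw [hD1def, hD0def, hRdef]
    have h1 : |kx| ^ q'x ≤ 2 ^ P * |kx| ^ q'x := le_mul_of_one_le_left hk0 h2P1
    have h2 : 1 + |s1| ^ pMx ≤ 2 ^ P * (1 + |s0| ^ pMx) + 2 ^ P * Su := by
      have h0 : (0:ℝ) ≤ |s0| ^ pMx := Real.rpow_nonneg (abs_nonneg _) _
      nlinarith [hs1b]
    have hsum' : ∑ i, (1 + |ξ1 i| ^ px i) ≤
        2 ^ P * (∑ i, (1 + |ξ0 i| ^ px i) + ∑ i, Sg i) := hsum.trans (le_of_eq hsum2)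
    linarith [h1, h2, hsum']
  -- combine
  have habsF : |F1 - F0| ≤ |F1| + |F0| := aux_abs_sub _ _
  have hF10 : (0:ℝ) ≤ |F1| ^ q'x := Real.rpow_nonneg (abs_nonneg _) _
  have hF00 : (0:ℝ) ≤ |F0| ^ q'x := Real.rpow_nonneg (abs_nonneg _) _
  have h2Q : (2:ℝ) ^ q'x ≤ 2 ^ Q := Real.rpow_le_rpow_of_exponent_le one_le_two hq'Q
  have h2Q0 : (0:ℝ) ≤ (2:ℝ) ^ Q := Real.rpow_nonneg (by norm_num) _
  calc |F1 - F0| ^ q'x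
      ≤ (|F1| + |F0|) ^ q'x :=
        Real.rpow_le_rpow (abs_nonneg _) habsF hq'pos.le
    _ ≤ 2 ^ q'x * (|F1| ^ q'x + |F0| ^ q'x) :=
        aux_two _ _ _ (abs_nonneg _) (abs_nonneg _) hq'pos.le
    _ ≤ 2 ^ Q * (|F1| ^ q'x + |F0| ^ q'x) :=
        mul_le_mul_of_nonneg_right h2Q (by linarith)
    _ ≤ 2 ^ Q * (K₀ * D1 + K₀ * D0) :=
        mul_le_mul_of_nonneg_left (add_le_add hm1 hm0) h2Q0
    _ ≤ 2 ^ Q * (K₀ * (2 ^ P * (D0 + R)) + K₀ * (D0 + R)) := by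
        apply mul_le_mul_of_nonneg_left _ h2Q0
        exact add_le_add (mul_le_mul_of_nonneg_left hD1b hK₀0)
          (mul_le_mul_of_nonneg_left (le_add_of_nonneg_right hR0) hK₀0)
    _ = (2 ^ Q * K₀ * (2 ^ P + 1)) * (D0 + R) := by ring
    _ = (2 ^ Q * ((max 1 C) ^ Q * 4 ^ Q * (n : ℝ) ^ Q) * (2 ^ P + 1)) *
          ((|kx| ^ q'x + (1 + |s0| ^ pMx) + ∑ i, (1 + |ξ0 i| ^ px i)) + (Su + ∑ i, Sg i)) := by
        rw [hK₀def, hD0def, hRdef]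

private lemma aux_carath {n : ℕ} {μ : Measure (Fin n → ℝ)}
    {f : (Fin n → ℝ) → ℝ → (Fin n → ℝ) → ℝ}
    (hfmeas : ∀ (s : ℝ) (ξ : Fin n → ℝ), Measurable (fun x => f x s ξ))
    (hfcont : ∀ᵐ x ∂μ, Continuous (fun sξ : ℝ × (Fin n → ℝ) => f x sξ.1 sξ.2))
    {v : (Fin n → ℝ) → ℝ} {w : (Fin n → ℝ) → Fin n → ℝ}
    (hv : Measurable v) (hw : Measurable w) :
    AEMeasurable (fun x => f x (v x) (w x)) μ := by
  set T : Set (Fin n → ℝ) :=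
    {x | Continuous (fun sξ : ℝ × (Fin n → ℝ) => f x sξ.1 sξ.2)} with hTdef
  have hT : μ Tᶜ = 0 := hfcont
  set S : Set (Fin n → ℝ) := (toMeasurable μ Tᶜ)ᶜ with hSdef
  have hSm : MeasurableSet S := (measurableSet_toMeasurable μ Tᶜ).compl
  have hSc : μ Sᶜ = 0 := by
    rw [hSdef, compl_compl, measure_toMeasurable]; exact hT
  have hST : ∀ x ∈ S, Continuous (fun sξ : ℝ × (Fin n → ℝ) => f x sξ.1 sξ.2) := by
    intro x hx
    by_contra hc
    exact hx (subset_toMeasurable μ Tᶜ hc)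
  set F : (ℝ × (Fin n → ℝ)) → (Fin n → ℝ) → ℝ :=
    fun sξ => S.indicator (fun x => f x sξ.1 sξ.2) with hFdef
  have hcont : ∀ x, Continuous (fun sξ => F sξ x) := by
    intro x
    by_cases hx : x ∈ S
    · have : (fun sξ : ℝ × (Fin n → ℝ) => F sξ x) =
          fun sξ : ℝ × (Fin n → ℝ) => f x sξ.1 sξ.2 := by
        funext sξ
        simp only [hFdef, Set.indicator_of_mem hx]
      rw [this]
      exact hST x hx
    · have : (fun sξ : ℝ × (Fin n → ℝ) => F sξ x) = fun _ => (0:ℝ) := by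
        funext sξ
        simp only [hFdef, Set.indicator_of_notMem hx]
      rw [this]
      exact continuous_const
  have hmeas : ∀ sξ : ℝ × (Fin n → ℝ), Measurable (F sξ) := fun sξ =>
    (hfmeas _ _).indicator hSm
  have hF : Measurable (Function.uncurry F) :=
    measurable_uncurry_of_continuous_of_measurable hcont hmeas
  have hcomp : Measurable (fun x => F (v x, w x) x) :=
    hF.comp ((hv.prodMk hw).prodMk measurable_id)
  refine ⟨fun x => F (v x, w x) x, hcomp, ?_⟩
  have hsub : {x | ¬ f x (v x) (w x) = F (v x, w x) x} ⊆ Sᶜ := by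
    intro x hx
    intro hxS
    exact hx (by simp [hFdef, Set.indicator_of_mem hxS])
  exact measure_mono_null hsub hSc

private lemma aux_tendsto_zero {t : ℕ → ℝ} {e : ℝ} (he : 1 < e)
    (hne : (∑' j : ℕ, ENNReal.ofReal (|t j| ^ e)) ≠ ⊤) : Tendsto t atTop (𝓝 0) := by
  have h0 : Tendsto (fun j => ENNReal.ofReal (|t j| ^ e)) atTop (𝓝 0) :=
    ENNReal.tendsto_atTop_zero_of_tsum_ne_top hne
  have h1 : Tendsto (fun j => |t j| ^ e) atTop (𝓝 0) := by
    have h2 := (ENNReal.tendsto_toReal (show (0:ℝ≥0∞) ≠ ⊤ by simp)).comp h0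
    have heq : (fun j => (ENNReal.ofReal (|t j| ^ e)).toReal) = fun j => |t j| ^ e :=
      funext fun j => ENNReal.toReal_ofReal (Real.rpow_nonneg (abs_nonneg _) _)
    simp only [Function.comp_def, ENNReal.toReal_zero] at h2
    rwa [heq] at h2
  have hca : ContinuousAt (fun s : ℝ => s ^ e⁻¹) 0 :=
    Real.continuousAt_rpow_const 0 e⁻¹ (Or.inr (by positivity))
  have h3 : Tendsto (fun j => (|t j| ^ e) ^ e⁻¹) atTop (𝓝 ((0:ℝ) ^ e⁻¹)) :=
    Filter.Tendsto.comp hca h1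
  rw [Real.zero_rpow (inv_ne_zero (by linarith))] at h3
  have h4 : (fun j => (|t j| ^ e) ^ e⁻¹) = fun j => |t j| :=
    funext fun j => Real.rpow_rpow_inv (abs_nonneg _) (by linarith)
  rw [h4] at h3
  exact squeeze_zero_norm (fun j => le_of_eq (Real.norm_eq_abs _)) h3


/-- Continuity of the Nemytskii map associated to a Carathéodory function `f` with
anisotropic nonstandard growth: modular convergence of `u_k → u` and `g_k → g` implies
modular convergence (for the exponent `q'`) of `f(·, u_k(·), g_k(·)) → f(·, u(·), g(·))`. -/
theorem nemytskii_continuous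
    {n : ℕ} (hn : 3 ≤ n) (Ω : Set (Fin n → ℝ)) (hΩo : IsOpen Ω)
    (hΩb : Bornology.IsBounded Ω) (hΩc : IsConnected Ω)
    (p : Fin n → (Fin n → ℝ) → ℝ)
    (hpc : ∀ i, ContinuousOn (p i) (closure Ω))
    (hp1 : ∀ i, ∀ x ∈ closure Ω, 1 < p i x)
    (pM : (Fin n → ℝ) → ℝ) (hpM : ∀ x, pM x = ⨆ i, p i x)
    (f : (Fin n → ℝ) → ℝ → (Fin n → ℝ) → ℝ)
    (hfmeas : ∀ (s : ℝ) (ξ : Fin n → ℝ), Measurable (fun x => f x s ξ))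
    (hfcont : ∀ᵐ x ∂(volume.restrict Ω),
      Continuous (fun sξ : ℝ × (Fin n → ℝ) => f x sξ.1 sξ.2))
    (C : ℝ) (hC : 0 < C)
    (q : (Fin n → ℝ) → ℝ) (hqc : ContinuousOn q (closure Ω))
    (hq1 : ∀ x ∈ closure Ω, 1 < q x)
    (hqpM : ∀ x ∈ Ω, q x ≤ pM x)
    (q' : (Fin n → ℝ) → ℝ) (hq' : ∀ x, q' x = q x / (q x - 1))
    (k : (Fin n → ℝ) → ℝ) (hkm : Measurable k)
    (hkint : IntegrableOn (fun x => |k x| ^ q' x) Ω)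
    (r : Fin n → (Fin n → ℝ) → ℝ)
    (hrm : ∀ i, Measurable (r i)) (hrnn : ∀ i x, 0 ≤ r i x)
    (hr : ∀ i, ∀ x ∈ Ω, 1 < r i x * q' x ∧ r i x * q' x ≤ p i x)
    (hgrowth : ∀ᵐ x ∂(volume.restrict Ω), ∀ (s : ℝ) (ξ : Fin n → ℝ),
      |f x s ξ| ≤ C * (|k x| + |s| ^ (q x - 1) + ∑ i, |ξ i| ^ r i x))
    (u : ℕ → (Fin n → ℝ) → ℝ) (ulim : (Fin n → ℝ) → ℝ)
    (hum : ∀ j, Measurable (u j)) (hulm : Measurable ulim)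
    (huint : ∀ j, IntegrableOn (fun x => |u j x| ^ pM x) Ω)
    (hulint : IntegrableOn (fun x => |ulim x| ^ pM x) Ω)
    (g : ℕ → (Fin n → ℝ) → Fin n → ℝ) (glim : (Fin n → ℝ) → Fin n → ℝ)
    (hgm : ∀ j i, Measurable (fun x => g j x i)) (hglm : ∀ i, Measurable (fun x => glim x i))
    (hgint : ∀ j i, IntegrableOn (fun x => |g j x i| ^ p i x) Ω)
    (hglint : ∀ i, IntegrableOn (fun x => |glim x i| ^ p i x) Ω)
    (huconv : Tendsto (fun j => ∫ x in Ω, |u j x - ulim x| ^ pM x) atTop (𝓝 0))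
    (hgconv : ∀ i, Tendsto (fun j => ∫ x in Ω, |g j x i - glim x i| ^ p i x) atTop (𝓝 0)) :
    Tendsto (fun j => ∫ x in Ω, |f x (u j x) (g j x) - f x (ulim x) (glim x)| ^ q' x)
      atTop (𝓝 0) := by
  have hΩm : MeasurableSet Ω := hΩo.measurableSet
  have npos : 0 < n := by omega
  haveI : Nonempty (Fin n) := Fin.pos_iff_nonempty.mp npos
  -- compactness and uniform bounds on the exponents
  have hK : IsCompact (closure Ω) := hΩb.isCompact_closure
  have hKne : (closure Ω).Nonempty := hΩc.nonempty.closure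
  obtain ⟨x₀, hx₀, hmin⟩ := hK.exists_isMinOn hKne hqc
  have hδ : 0 < q x₀ - 1 := sub_pos.2 (hq1 x₀ hx₀)
  obtain ⟨Mq, hMq⟩ := hK.exists_bound_of_continuousOn hqc
  set Q : ℝ := max 1 (Mq / (q x₀ - 1)) with hQdef
  have hq'le : ∀ x ∈ closure Ω, q' x ≤ Q := by
    intro x hx
    rw [hq' x]
    refine le_trans ?_ (le_max_right _ _)
    have h1 : q x ≤ Mq := le_trans (le_abs_self _)
      (by simpa [Real.norm_eq_abs] using hMq x hx)
    have h2 : q x₀ - 1 ≤ q x - 1 := by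
      have := isMinOn_iff.mp hmin x hx
      linarith
    have h0 : 0 ≤ Mq := le_trans (abs_nonneg _)
      (by simpa [Real.norm_eq_abs] using hMq x₀ hx₀)
    exact div_le_div₀ h0 h1 hδ h2
  have hq'1 : ∀ x ∈ closure Ω, 1 ≤ q' x := by
    intro x hx
    rw [hq' x, le_div_iff₀ (by linarith [hq1 x hx])]
    linarith [hq1 x hx]
  have hq'pos : ∀ x ∈ closure Ω, 0 < q' x := fun x hx =>
    lt_of_lt_of_le one_pos (hq'1 x hx)
  have hPb : ∀ i : Fin n, ∃ Ci : ℝ, ∀ x ∈ closure Ω, ‖p i x‖ ≤ Ci := fun i =>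
    hK.exists_bound_of_continuousOn (hpc i)
  choose Cb hCb using hPb
  set P : ℝ := 1 + ∑ i, |Cb i| with hPdef
  have hpile : ∀ i, ∀ x ∈ closure Ω, p i x ≤ P := by
    intro i x hx
    rw [hPdef]
    have h1 : p i x ≤ |Cb i| := le_trans (le_abs_self _)
      (le_trans (by simpa [Real.norm_eq_abs] using hCb i x hx) (le_abs_self _))
    have h2 : |Cb i| ≤ ∑ j, |Cb j| :=
      Finset.single_le_sum (f := fun j => |Cb j|) (fun j _ => abs_nonneg _) (Finset.mem_univ i)
    linarith
  have hpMle : ∀ x ∈ closure Ω, pM x ≤ P := by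
    intro x hx
    rw [hpM x]
    exact ciSup_le fun i => hpile i x hx
  have hpipM : ∀ i x, p i x ≤ pM x := by
    intro i x
    rw [hpM x]
    exact le_ciSup (f := fun i => p i x) (Set.Finite.bddAbove (Set.finite_range _)) i
  have hpM1 : ∀ x ∈ closure Ω, 1 < pM x := fun x hx =>
    lt_of_lt_of_le (hp1 ⟨0, npos⟩ x hx) (hpipM _ x)
  -- measure-theoretic preliminaries
  haveI : IsFiniteMeasure (volume.restrict Ω) :=
    ⟨by rw [Measure.restrict_apply_univ]; exact hΩb.measure_lt_top⟩
  have hqa : AEMeasurable q (volume.restrict Ω) :=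
    (hqc.mono subset_closure).aemeasurable hΩm
  have hq'a : AEMeasurable q' (volume.restrict Ω) := by
    have hfun : q' = fun x => q x / (q x - 1) := funext hq'
    rw [hfun]
    exact hqa.div (hqa.sub aemeasurable_const)
  have hpa : ∀ i, AEMeasurable (p i) (volume.restrict Ω) := fun i =>
    ((hpc i).mono subset_closure).aemeasurable hΩm
  have hpMa : AEMeasurable pM (volume.restrict Ω) := by
    have hfun : pM = fun x => ⨆ i, p i x := funext hpM
    rw [hfun]
    exact AEMeasurable.iSup hpa
  have habsm : ∀ {h : (Fin n → ℝ) → ℝ}, Measurable h → Measurable (fun x => |h x|) :=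
    fun hh => continuous_abs.measurable.comp hh
  have hgvm : ∀ j, Measurable (g j) := fun j => measurable_pi_lambda _ (hgm j)
  have hglvm : Measurable glim := measurable_pi_lambda _ hglm
  have hFa : ∀ j, AEMeasurable
      (fun x => |f x (u j x) (g j x) - f x (ulim x) (glim x)| ^ q' x)
      (volume.restrict Ω) := by
    intro j
    have h1 := aux_carath hfmeas hfcont (hum j) (hgvm j)
    have h2 := aux_carath hfmeas hfcont hulm hglvm
    exact (continuous_abs.measurable.comp_aemeasurable (h1.sub h2)).pow hq'a
  have hvint : ∀ j, Integrable (fun x => |u j x - ulim x| ^ pM x) (volume.restrict Ω) := by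
    intro j
    have hbint : Integrable (fun x => (2:ℝ) ^ P * (|u j x| ^ pM x + |ulim x| ^ pM x))
        (volume.restrict Ω) := ((huint j).add hulint).const_mul _
    refine Integrable.mono' hbint ?_ ?_
    · exact ((habsm ((hum j).sub hulm)).aemeasurable.pow hpMa).aestronglyMeasurable
    · filter_upwards [ae_restrict_mem hΩm] with x hx
      have hxc := subset_closure hx
      have hpM0 : (0:ℝ) ≤ pM x := by linarith [hpM1 x hxc]
      rw [Real.norm_eq_abs, abs_of_nonneg (Real.rpow_nonneg (abs_nonneg _) _)]
      calc |u j x - ulim x| ^ pM x ≤ (|u j x| + |ulim x|) ^ pM x :=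
            Real.rpow_le_rpow (abs_nonneg _) (aux_abs_sub _ _) hpM0
        _ ≤ 2 ^ pM x * (|u j x| ^ pM x + |ulim x| ^ pM x) :=
            aux_two _ _ _ (abs_nonneg _) (abs_nonneg _) hpM0
        _ ≤ 2 ^ P * (|u j x| ^ pM x + |ulim x| ^ pM x) :=
            mul_le_mul_of_nonneg_right
              (Real.rpow_le_rpow_of_exponent_le one_le_two (hpMle x hxc))
              (add_nonneg (Real.rpow_nonneg (abs_nonneg _) _)
                (Real.rpow_nonneg (abs_nonneg _) _))
  have hwint : ∀ j i, Integrable (fun x => |g j x i - glim x i| ^ p i x)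
      (volume.restrict Ω) := by
    intro j i
    have hbint : Integrable (fun x => (2:ℝ) ^ P * (|g j x i| ^ p i x + |glim x i| ^ p i x))
        (volume.restrict Ω) := ((hgint j i).add (hglint i)).const_mul _
    refine Integrable.mono' hbint ?_ ?_
    · exact ((habsm ((hgm j i).sub (hglm i))).aemeasurable.pow (hpa i)).aestronglyMeasurable
    · filter_upwards [ae_restrict_mem hΩm] with x hx
      have hxc := subset_closure hx
      have hp0 : (0:ℝ) ≤ p i x := by linarith [hp1 i x hxc]
      rw [Real.norm_eq_abs, abs_of_nonneg (Real.rpow_nonneg (abs_nonneg _) _)]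
      calc |g j x i - glim x i| ^ p i x ≤ (|g j x i| + |glim x i|) ^ p i x :=
            Real.rpow_le_rpow (abs_nonneg _) (aux_abs_sub _ _) hp0
        _ ≤ 2 ^ p i x * (|g j x i| ^ p i x + |glim x i| ^ p i x) :=
            aux_two _ _ _ (abs_nonneg _) (abs_nonneg _) hp0
        _ ≤ 2 ^ P * (|g j x i| ^ p i x + |glim x i| ^ p i x) :=
            mul_le_mul_of_nonneg_right
              (Real.rpow_le_rpow_of_exponent_le one_le_two (hpile i x hxc))
              (add_nonneg (Real.rpow_nonneg (abs_nonneg _) _)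
                (Real.rpow_nonneg (abs_nonneg _) _))
  -- subsequence argument
  apply tendsto_of_subseq_tendsto
  intro ns hns
  have hev : ∀ M : ℕ, ∀ᶠ j in atTop,
      (∫ x in Ω, |u (ns j) x - ulim x| ^ pM x) ≤ (1/2:ℝ) ^ M ∧
      ∀ i, (∫ x in Ω, |g (ns j) x i - glim x i| ^ p i x) ≤ (1/2:ℝ) ^ M := by
    intro M
    have hpos : (0:ℝ) < (1/2) ^ M := by positivity
    have h1 := (huconv.comp hns).eventually_lt_const hpos
    have h2 : ∀ᶠ j in atTop, ∀ i,
        (∫ x in Ω, |g (ns j) x i - glim x i| ^ p i x) < (1/2:ℝ) ^ M :=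
      eventually_all.2 fun i => ((hgconv i).comp hns).eventually_lt_const hpos
    filter_upwards [h1, h2] with j hj1 hj2
    exact ⟨hj1.le, fun i => (hj2 i).le⟩
  obtain ⟨ms, -, hms⟩ := extraction_forall_of_eventually hev
  refine ⟨ms, ?_⟩
  set Su : (Fin n → ℝ) → ℝ≥0∞ :=
    fun x => ∑' j : ℕ, ENNReal.ofReal (|u (ns (ms j)) x - ulim x| ^ pM x) with hSudef
  set Sg : Fin n → (Fin n → ℝ) → ℝ≥0∞ :=
    fun i x => ∑' j : ℕ, ENNReal.ofReal (|g (ns (ms j)) x i - glim x i| ^ p i x) with hSgdef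
  have hvea : ∀ j, AEMeasurable
      (fun x => ENNReal.ofReal (|u (ns (ms j)) x - ulim x| ^ pM x)) (volume.restrict Ω) :=
    fun j => ENNReal.measurable_ofReal.comp_aemeasurable
      ((habsm ((hum _).sub hulm)).aemeasurable.pow hpMa)
  have hwea : ∀ i j, AEMeasurable
      (fun x => ENNReal.ofReal (|g (ns (ms j)) x i - glim x i| ^ p i x)) (volume.restrict Ω) :=
    fun i j => ENNReal.measurable_ofReal.comp_aemeasurable
      ((habsm ((hgm _ i).sub (hglm i))).aemeasurable.pow (hpa i))
  have hSua : AEMeasurable Su (volume.restrict Ω) := by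
    rw [hSudef]
    exact AEMeasurable.ennreal_tsum fun j => hvea j
  have hSga : ∀ i, AEMeasurable (Sg i) (volume.restrict Ω) := by
    intro i
    rw [hSgdef]
    exact AEMeasurable.ennreal_tsum fun j => hwea i j
  have hgeo : Summable (fun j : ℕ => ((1:ℝ)/2) ^ j) :=
    summable_geometric_of_lt_one (by norm_num) (by norm_num)
  have hSune : ∫⁻ x, Su x ∂(volume.restrict Ω) ≠ ⊤ := by
    simp only [hSudef]
    rw [lintegral_tsum fun j => hvea j]
    refine ne_top_of_le_ne_top
      (show ENNReal.ofReal (∑' j : ℕ, ((1:ℝ)/2) ^ j) ≠ ⊤ from ENNReal.ofReal_ne_top) ?_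
    calc ∑' j : ℕ, ∫⁻ x, ENNReal.ofReal (|u (ns (ms j)) x - ulim x| ^ pM x) ∂(volume.restrict Ω)
        = ∑' j : ℕ, ENNReal.ofReal
            (∫ x, |u (ns (ms j)) x - ulim x| ^ pM x ∂(volume.restrict Ω)) := by
          refine tsum_congr fun j => ?_
          rw [← ofReal_integral_eq_lintegral_ofReal (hvint _)
            (Filter.Eventually.of_forall fun x => Real.rpow_nonneg (abs_nonneg _) _)]
      _ ≤ ∑' j : ℕ, ENNReal.ofReal (((1:ℝ)/2) ^ j) :=
          ENNReal.tsum_le_tsum fun j => ENNReal.ofReal_le_ofReal (hms j).1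
      _ = ENNReal.ofReal (∑' j : ℕ, ((1:ℝ)/2) ^ j) :=
          (ENNReal.ofReal_tsum_of_nonneg (fun j => by positivity) hgeo).symm
  have hSgne : ∀ i, ∫⁻ x, Sg i x ∂(volume.restrict Ω) ≠ ⊤ := by
    intro i
    simp only [hSgdef]
    rw [lintegral_tsum fun j => hwea i j]
    refine ne_top_of_le_ne_top
      (show ENNReal.ofReal (∑' j : ℕ, ((1:ℝ)/2) ^ j) ≠ ⊤ from ENNReal.ofReal_ne_top) ?_
    calc ∑' j : ℕ, ∫⁻ x, ENNReal.ofReal (|g (ns (ms j)) x i - glim x i| ^ p i x) ∂(volume.restrict Ω)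
        = ∑' j : ℕ, ENNReal.ofReal
            (∫ x, |g (ns (ms j)) x i - glim x i| ^ p i x ∂(volume.restrict Ω)) := by
          refine tsum_congr fun j => ?_
          rw [← ofReal_integral_eq_lintegral_ofReal (hwint _ i)
            (Filter.Eventually.of_forall fun x => Real.rpow_nonneg (abs_nonneg _) _)]
      _ ≤ ∑' j : ℕ, ENNReal.ofReal (((1:ℝ)/2) ^ j) :=
          ENNReal.tsum_le_tsum fun j => ENNReal.ofReal_le_ofReal ((hms j).2 i)
      _ = ENNReal.ofReal (∑' j : ℕ, ((1:ℝ)/2) ^ j) :=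
          (ENNReal.ofReal_tsum_of_nonneg (fun j => by positivity) hgeo).symm
  have haeΩ : ∀ᵐ x ∂(volume.restrict Ω), x ∈ Ω := ae_restrict_mem hΩm
  have haeSu : ∀ᵐ x ∂(volume.restrict Ω), Su x < ⊤ := ae_lt_top' hSua hSune
  have haeSg : ∀ᵐ x ∂(volume.restrict Ω), ∀ i, Sg i x < ⊤ :=
    ae_all_iff.2 fun i => ae_lt_top' (hSga i) (hSgne i)
  -- the dominating function
  set H : (Fin n → ℝ) → ℝ := fun x =>
    (2 ^ Q * ((max 1 C) ^ Q * 4 ^ Q * (n:ℝ) ^ Q) * (2 ^ P + 1)) *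
    ((|k x| ^ q' x + (1 + |ulim x| ^ pM x) + ∑ i, (1 + |glim x i| ^ p i x)) +
     ((Su x).toReal + ∑ i, (Sg i x).toReal)) with hHdef
  have hHint : Integrable H (volume.restrict Ω) := by
    rw [hHdef]
    refine Integrable.const_mul ?_ _
    refine Integrable.add (Integrable.add (Integrable.add hkint ?_) ?_) (Integrable.add ?_ ?_)
    · exact (integrable_const 1).add hulint
    · exact integrable_finset_sum _ fun i _ => (integrable_const 1).add (hglint i)
    · exact integrable_toReal_of_lintegral_ne_top hSua hSune
    · exact integrable_finset_sum _ fun i _ =>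
        integrable_toReal_of_lintegral_ne_top (hSga i) (hSgne i)
  -- a.e. bound
  have hbound : ∀ j : ℕ, ∀ᵐ x ∂(volume.restrict Ω),
      ‖|f x (u (ns (ms j)) x) (g (ns (ms j)) x) - f x (ulim x) (glim x)| ^ q' x‖ ≤ H x := by
    intro j
    filter_upwards [haeΩ, haeSu, haeSg, hgrowth] with x hxΩ hSux hSgx hgx
    have hxc := subset_closure hxΩ
    rw [Real.norm_eq_abs, abs_of_nonneg (Real.rpow_nonneg (abs_nonneg _) _)]
    have hvu : |u (ns (ms j)) x - ulim x| ^ pM x ≤ (Su x).toReal := by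
      have h1 : ENNReal.ofReal (|u (ns (ms j)) x - ulim x| ^ pM x) ≤ Su x := by
        simp only [hSudef]
        exact ENNReal.le_tsum j
      have h2 := ENNReal.toReal_mono hSux.ne h1
      rwa [ENNReal.toReal_ofReal (Real.rpow_nonneg (abs_nonneg _) _)] at h2
    have hvg : ∀ i, |g (ns (ms j)) x i - glim x i| ^ p i x ≤ (Sg i x).toReal := by
      intro i
      have h1 : ENNReal.ofReal (|g (ns (ms j)) x i - glim x i| ^ p i x) ≤ Sg i x := by
        simp only [hSgdef]
        exact ENNReal.le_tsum j
      have h2 := ENNReal.toReal_mono (hSgx i).ne h1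
      rwa [ENNReal.toReal_ofReal (Real.rpow_nonneg (abs_nonneg _) _)] at h2
    simp only [hHdef]
    exact aux_pointwise npos hC (hq1 x hxc) (hq' x) (hq'le x hxc) (hqpM x hxΩ)
      (hpMle x hxc) (fun i => hpile i x hxc) (fun i => hrnn i x) (fun i => (hr i x hxΩ).2)
      (hgx _ _) (hgx _ _) hvu hvg
  -- a.e. convergence
  have hlim : ∀ᵐ x ∂(volume.restrict Ω), Tendsto (fun j : ℕ =>
      |f x (u (ns (ms j)) x) (g (ns (ms j)) x) - f x (ulim x) (glim x)| ^ q' x)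
      atTop (𝓝 0) := by
    filter_upwards [haeΩ, haeSu, haeSg, hfcont] with x hxΩ hSux hSgx hfx
    have hxc := subset_closure hxΩ
    have hu' : Tendsto (fun j => u (ns (ms j)) x) atTop (𝓝 (ulim x)) := by
      have hd : Tendsto (fun j => u (ns (ms j)) x - ulim x) atTop (𝓝 0) := by
        refine aux_tendsto_zero (hpM1 x hxc) ?_
        simp only [hSudef] at hSux
        exact hSux.ne
      have := hd.add_const (ulim x)
      simpa using this
    have hg' : Tendsto (fun j => g (ns (ms j)) x) atTop (𝓝 (glim x)) := by
      rw [tendsto_pi_nhds]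
      intro i
      have hd : Tendsto (fun j => g (ns (ms j)) x i - glim x i) atTop (𝓝 0) := by
        refine aux_tendsto_zero (hp1 i x hxc) ?_
        have h := hSgx i
        simp only [hSgdef] at h
        exact h.ne
      have := hd.add_const (glim x i)
      simpa using this
    have hff : Tendsto (fun j => f x (u (ns (ms j)) x) (g (ns (ms j)) x)) atTop
        (𝓝 (f x (ulim x) (glim x))) :=
      Filter.Tendsto.comp (hfx.tendsto (ulim x, glim x)) (hu'.prodMk_nhds hg')
    have hdiff : Tendsto
        (fun j => |f x (u (ns (ms j)) x) (g (ns (ms j)) x) - f x (ulim x) (glim x)|)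
        atTop (𝓝 0) := by
      have h1 := hff.sub_const (f x (ulim x) (glim x))
      rw [sub_self] at h1
      have h2 := Filter.Tendsto.comp (continuous_abs.tendsto (0:ℝ)) h1
      simpa [Function.comp_def] using h2
    have hq'x : 0 < q' x := hq'pos x hxc
    have hca : ContinuousAt (fun s : ℝ => s ^ q' x) 0 :=
      Real.continuousAt_rpow_const 0 (q' x) (Or.inr hq'x.le)
    have h3 := Filter.Tendsto.comp hca hdiff
    simpa [Function.comp_def, Real.zero_rpow hq'x.ne'] using h3
  -- dominated convergence
  have hdct := tendsto_integral_of_dominated_convergence (μ := volume.restrict Ω)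
    (F := fun j x => |f x (u (ns (ms j)) x) (g (ns (ms j)) x) - f x (ulim x) (glim x)| ^ q' x)
    (f := fun _ => (0:ℝ)) H
    (fun j => (hFa (ns (ms j))).aestronglyMeasurable) hHint hbound hlim
  rw [integral_zero] at hdct
  exact hdct
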